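/- arXiv:1806.09817 — 5 statements merged into one kernel-verified Lean document; each statement's English description precedes it below -/
import Mathlib

section
/- In the planted clique model with parameters n, k, Q (n ≥ 2, 1 ≤ k ≤ n), the probability that there exists a vertex v ∈ Q with deg(v) < (k−1) + (n−k)/2 − √(n·ln n) is at most 1/n. -/
open MeasureTheory

namespace Stmt2

noncomputable section
open scoped Classical

variable {n : ℕ}

/-- Both endpoints of the unordered pair `p` lie in `Q`. -/
def BothInQ (Q : Finset (Fin n)) (p : Sym2 (Fin n)) : Prop := ∀ x ∈ p, x ∈ Q

/-- Index type: unordered pairs of distinct vertices not both lying in `Q`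
(the "remaining pairs", whose edge-status is random). -/
def FreePair (n : ℕ) (Q : Finset (Fin n)) : Type :=
  {p : Sym2 (Fin n) // ¬ p.IsDiag ∧ ¬ BothInQ Q p}

instance (n : ℕ) (Q : Finset (Fin n)) : Fintype (FreePair n Q) := by
  unfold FreePair; infer_instance

/-- Sample space of the planted clique model: one Boolean for each free pair. -/
def Ω (n : ℕ) (Q : Finset (Fin n)) : Type := FreePair n Q → Bool

instance (n : ℕ) (Q : Finset (Fin n)) : MeasurableSpace (Ω n Q) := MeasurableSpace.pi

/-- The Bernoulli(1/2) measure on `Bool`. -/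
def bernoulliHalf : Measure Bool := (PMF.bernoulli (1 / 2) (by norm_num)).toMeasure

instance : IsProbabilityMeasure bernoulliHalf := PMF.toMeasure.isProbabilityMeasure _

/-- The planted clique measure: each remaining pair is an edge independently w.p. 1/2. -/
def plantedClique (n : ℕ) (Q : Finset (Fin n)) : Measure (Ω n Q) :=
  Measure.pi fun _ => bernoulliHalf

/-- `u` and `v` are adjacent in the planted clique graph: they are distinct, and
either both lie in `Q` (a planted clique edge) or else the coin of the pair `{u,v}`
came up `true`. -/
def Adj (Q : Finset (Fin n)) (ω : Ω n Q) (u v : Fin n) : Prop :=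
  ∃ hne : u ≠ v,
    BothInQ Q s(u, v) ∨
      ∃ h : ¬ BothInQ Q s(u, v),
        ω ⟨s(u, v), ⟨fun hd => hne (Sym2.mk_isDiag_iff.mp hd), h⟩⟩ = true

/-- Degree of vertex `v` in the planted clique graph: its number of neighbors. -/
def deg (Q : Finset (Fin n)) (ω : Ω n Q) (v : Fin n) : ℕ :=
  (Finset.univ.filter fun u : Fin n => Adj Q ω u v).card

end

-- my helpers
noncomputable section
open scoped Classical
variable {n : ℕ} {Q : Finset (Fin n)}

instance : Finite (Ω n Q) := by unfold Ω FreePair; infer_instance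

instance : MeasurableSingletonClass (Ω n Q) :=
  inferInstanceAs (MeasurableSingletonClass (FreePair n Q → Bool))

instance : IsProbabilityMeasure (plantedClique n Q) :=
  MeasureTheory.Measure.pi.instIsProbabilityMeasure _

def coin {v : Fin n} (hv : v ∈ Q) {u : Fin n} (hu : u ∉ Q) : FreePair n Q :=
  ⟨s(u, v), ⟨fun hd => hu (by rw [Sym2.mk_isDiag_iff.mp hd]; exact hv),
    fun hb => hu (hb u (Sym2.mem_mk_left u v))⟩⟩

/-- indicator of the coin for pair {u,v} -/
def χ {v : Fin n} (hv : v ∈ Q) (u : Fin n) (ω : Ω n Q) : ℝ :=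
  if hu : u ∈ Q then 0 else (if ω (coin hv hu) then 1 else 0)

lemma deg_eq {v : Fin n} (hv : v ∈ Q) (hk1 : 1 ≤ Q.card) (ω : Ω n Q) :
    (deg Q ω v : ℝ) = ((Q.card : ℝ) - 1) + ∑ u : Fin n, χ hv u ω := by
  have h1 : deg Q ω v = ∑ u : Fin n, if Adj Q ω u v then 1 else 0 :=
    Finset.card_filter _ _
  have h2 : ∀ u : Fin n, ((if Adj Q ω u v then (1:ℝ) else 0)) =
      (if u ∈ Q.erase v then (1:ℝ) else 0) + χ hv u ω := by
    intro u
    by_cases hu : u ∈ Q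
    · by_cases huv : u = v
      · subst huv
        have hna : ¬ Adj Q ω u u := by rintro ⟨hne, -⟩; exact hne rfl
        simp [hna, χ, hu]
      · have ha : Adj Q ω u v := by
          refine ⟨huv, Or.inl ?_⟩
          intro x hx
          rcases Sym2.mem_iff.mp hx with rfl | rfl <;> assumption
        simp [ha, χ, hu, Finset.mem_erase, huv]
    · have huv : u ≠ v := fun h => hu (h ▸ hv)
      have ha : Adj Q ω u v ↔ ω (coin hv hu) = true := by
        constructor
        · rintro ⟨hne, hb | ⟨hnb, hc⟩⟩
          · exact absurd (hb u (Sym2.mem_mk_left u v)) hu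
          · exact hc
        · intro hc
          exact ⟨huv, Or.inr ⟨fun hb => hu (hb u (Sym2.mem_mk_left u v)), hc⟩⟩
      have hne : u ∉ Q.erase v := fun h => hu (Finset.mem_of_mem_erase h)
      by_cases hb : ω (coin hv hu) = true
      · simp [ha, hb, χ, hu, hne]
      · simp [ha, hb, χ, hu, hne]
  rw [h1]
  push_cast
  rw [Finset.sum_congr rfl fun u _ => h2 u, Finset.sum_add_distrib]
  congr 1
  have h3 : Finset.filter (fun x => x ∈ Q.erase v) Finset.univ = Q.erase v := by
    ext x; simp
  rw [Finset.sum_boole, h3, Finset.card_erase_of_mem hv,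
    Nat.cast_sub hk1, Nat.cast_one]

def Fq (v : Fin n) (t : ℝ) (p : FreePair n Q) (b : Bool) : ℝ :=
  if v ∈ p.1 then (if b then Real.exp t else 1) else 1

lemma mgf_sum_chi {v : Fin n} (hv : v ∈ Q) (t : ℝ) :
    ProbabilityTheory.mgf (fun ω => ∑ u : Fin n, χ hv u ω) (plantedClique n Q) t
      = ((1 + Real.exp t) / 2) ^ (Finset.univ \ Q).card := by
  set U : Finset (Fin n) := Finset.univ \ Q with hUdef
  set T : Finset (FreePair n Q) :=
      Finset.univ.filter (fun p : FreePair n Q => v ∈ p.1) with hTdef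
  have hUQ : ∀ u, u ∈ U → u ∉ Q := fun u hu => (Finset.mem_sdiff.mp hu).2
  have hi : ∀ u (hu : u ∈ U), coin hv (hUQ u hu) ∈ T := by
    intro u hu
    simp only [hTdef, Finset.mem_filter, Finset.mem_univ, true_and, coin]
    exact Finset.mem_filter.mpr ⟨Finset.mem_univ _, Sym2.mem_mk_right u v⟩
  have hinj : ∀ a (ha : a ∈ U) b (hb : b ∈ U),
      coin hv (hUQ a ha) = coin hv (hUQ b hb) → a = b := by
    intro a ha b hb h
    have h2 : s(a, v) = s(b, v) := congrArg Subtype.val h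
    exact Sym2.congr_left.mp h2
  have hsurj : ∀ p ∈ T, ∃ a, ∃ ha : a ∈ U, coin hv (hUQ a ha) = p := by
    rintro ⟨z, hz⟩ hp
    revert hp
    revert hz
    induction z using Sym2.ind with
    | _ a b =>
      intro hz hp
      have hvz : v ∈ s(a, b) := (Finset.mem_filter.mp hp).2
      have hz2 := hz.2
      rcases Sym2.mem_iff.mp hvz with rfl | rfl
      · have hb : b ∉ Q := fun hbQ => hz2 fun x hx => by
          rcases Sym2.mem_iff.mp hx with rfl | rfl <;> assumption
        refine ⟨b, Finset.mem_sdiff.mpr ⟨Finset.mem_univ _, hb⟩, ?_⟩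
        exact Subtype.ext Sym2.eq_swap
      · have ha : a ∉ Q := fun haQ => hz2 fun x hx => by
          rcases Sym2.mem_iff.mp hx with rfl | rfl <;> assumption
        exact ⟨a, Finset.mem_sdiff.mpr ⟨Finset.mem_univ _, ha⟩, rfl⟩
  have hpt : (fun ω : Ω n Q => Real.exp (t * ∑ u : Fin n, χ hv u ω))
      = fun ω => ∏ p : FreePair n Q, Fq v t p (ω p) := by
    funext ω
    rw [Finset.mul_sum, Real.exp_sum]
    have step1 : ∏ u ∈ Finset.univ, Real.exp (t * χ hv u ω)
        = ∏ u ∈ U, Real.exp (t * χ hv u ω) :=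
      (Finset.prod_subset (Finset.subset_univ U) (fun x _ hx => by
        have hxQ : x ∈ Q := by
          by_contra hc
          exact hx (Finset.mem_sdiff.mpr ⟨Finset.mem_univ _, hc⟩)
        simp [χ, hxQ])).symm
    have step2 : ∏ p : FreePair n Q, Fq v t p (ω p) = ∏ p ∈ T, Fq v t p (ω p) :=
      (Finset.prod_subset (Finset.subset_univ T) (fun p _ hp => by
        have hnp : ¬ v ∈ p.1 := by
          simpa [hTdef] using hp
        simp [Fq, hnp])).symm
    rw [step1, step2]
    refine Finset.prod_bij (fun u hu => coin hv (hUQ u hu)) hi hinj hsurj ?_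
    intro u hu
    have hu' := hUQ u hu
    have hvmem : v ∈ (coin hv hu' : FreePair n Q).1 := Sym2.mem_mk_right u v
    simp only [χ, dif_neg hu', Fq, if_pos hvmem]
    by_cases hb : ω (coin hv hu') = true
    · simp [hb]
    · simp [hb]
  have hcard : U.card = T.card :=
    Finset.card_bij (fun u hu => coin hv (hUQ u hu)) hi hinj hsurj
  have hpint : ∀ p : FreePair n Q,
      ∫ b, Fq v t p b ∂bernoulliHalf = if v ∈ p.1 then (1 + Real.exp t) / 2 else 1 := by
    intro p
    by_cases hp : v ∈ p.1
    · simp only [Fq, if_pos hp]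
      rw [bernoulliHalf, PMF.integral_eq_sum]
      simp [PMF.bernoulli_apply, ENNReal.toReal_div]
      norm_num
      ring
    · simp only [Fq, if_neg hp]
      simp only [integral_const, measureReal_def, measure_univ, ENNReal.toReal_one, smul_eq_mul, one_mul]
  rw [ProbabilityTheory.mgf, hpt]
  calc (∫ ω, ∏ p : FreePair n Q, Fq v t p (ω p) ∂(plantedClique n Q))
      = ∏ p : FreePair n Q, ∫ b, Fq v t p b ∂bernoulliHalf := by
        letI : MeasureSpace Bool := ⟨bernoulliHalf⟩
        haveI : IsProbabilityMeasure (volume : Measure Bool) :=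
          inferInstanceAs (IsProbabilityMeasure bernoulliHalf)
        exact MeasureTheory.integral_fintype_prod_eq_prod
          (fun p => Fq v t p)
    _ = ∏ p : FreePair n Q, if v ∈ p.1 then (1 + Real.exp t) / 2 else 1 :=
        Finset.prod_congr rfl fun p _ => hpint p
    _ = ((1 + Real.exp t) / 2) ^ T.card := by
        rw [Finset.prod_ite, Finset.prod_const, Finset.prod_const_one, mul_one, hTdef]
    _ = ((1 + Real.exp t) / 2) ^ U.card := by rw [hcard]

lemma chi_nonneg {v : Fin n} (hv : v ∈ Q) (u : Fin n) (ω : Ω n Q) : 0 ≤ χ hv u ω := by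
  unfold χ
  split
  · exact le_rfl
  · split <;> norm_num

lemma half_one_add_exp_le (t : ℝ) : (1 + Real.exp t) / 2 ≤ Real.exp (t / 2 + t ^ 2 / 8) := by
  have h1 : (1 + Real.exp t) / 2 = Real.exp (t / 2) * Real.cosh (t / 2) := by
    rw [Real.cosh_eq]
    have e1 : Real.exp (t / 2) * Real.exp (t / 2) = Real.exp t := by
      rw [← Real.exp_add, add_halves]
    have e2 : Real.exp (t / 2) * Real.exp (-t / 2) = 1 := by
      rw [← Real.exp_add, neg_div, add_neg_cancel, Real.exp_zero]
    field_simp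
    simp only [neg_div] at e2 ⊢
    linear_combination -e1 - e2
  have h2 : Real.cosh (t / 2) ≤ Real.exp ((t / 2) ^ 2 / 2) := Real.cosh_le_exp_half_sq (t / 2)
  calc (1 + Real.exp t) / 2 = Real.exp (t / 2) * Real.cosh (t / 2) := h1
    _ ≤ Real.exp (t / 2) * Real.exp ((t / 2) ^ 2 / 2) := by
        exact mul_le_mul_of_nonneg_left h2 (Real.exp_pos _).le
    _ = Real.exp (t / 2 + t ^ 2 / 8) := by rw [← Real.exp_add]; ring_nf

lemma vertexBound (n k : ℕ) (hn : 2 ≤ n) (hk1 : 1 ≤ k) (hkn : k ≤ n)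
    (Q : Finset (Fin n)) (hQ : Q.card = k) (v : Fin n) (hv : v ∈ Q) :
    plantedClique n Q {ω : Ω n Q |
        (deg Q ω v : ℝ) < ((k : ℝ) - 1) + ((n : ℝ) - k) / 2 - Real.sqrt (n * Real.log n)} ≤
      ENNReal.ofReal (1 / (n : ℝ) ^ 2) := by
  have hn0 : (0:ℝ) < n := by exact_mod_cast Nat.lt_of_lt_of_le Nat.zero_lt_two hn
  have hlog : 0 < Real.log n := Real.log_pos (by exact_mod_cast hn)
  set τ : ℝ := Real.sqrt (n * Real.log n) with hτdef
  have hττ : τ ^ 2 = n * Real.log n := Real.sq_sqrt (by positivity)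
  have hτpos : 0 < τ := Real.sqrt_pos.mpr (by positivity)
  set m : ℕ := (Finset.univ \ Q).card with hmdef
  have hmval : m = n - k := by
    rw [hmdef, Finset.card_sdiff_of_subset (Finset.subset_univ Q), Finset.card_univ, Fintype.card_fin, hQ]
  have hmR : (m : ℝ) = (n : ℝ) - k := by rw [hmval, Nat.cast_sub hkn]
  have hmn : (m : ℝ) ≤ n := by rw [hmR]; have : (0:ℝ) ≤ k := by positivity
                               linarith
  have hQcard : 1 ≤ Q.card := hQ ▸ hk1
  have hsnn : ∀ ω : Ω n Q, 0 ≤ ∑ u : Fin n, χ hv u ω :=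
    fun ω => Finset.sum_nonneg fun u _ => chi_nonneg hv u ω
  by_cases hmz : m = 0
  · have hempty : {ω : Ω n Q |
        (deg Q ω v : ℝ) < ((k : ℝ) - 1) + ((n : ℝ) - k) / 2 - τ} = ∅ := by
      ext ω
      simp only [Set.mem_setOf_eq, Set.mem_empty_iff_false, iff_false, not_lt]
      rw [deg_eq hv hQcard ω, hQ]
      have h0 : (n : ℝ) - k = 0 := by rw [← hmR, hmz]; norm_num
      have := hsnn ω
      rw [h0]
      linarith
    rw [hempty]
    simp
  · have hm1 : (1:ℝ) ≤ m := by exact_mod_cast Nat.one_le_iff_ne_zero.mpr hmz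
    have hmpos : (0:ℝ) < m := by linarith
    set t : ℝ := -(4 * τ / m) with htdef
    have ht : t ≤ 0 := neg_nonpos.mpr (by positivity)
    set ε : ℝ := (m : ℝ) / 2 - τ with hεdef
    have hsub : {ω : Ω n Q |
          (deg Q ω v : ℝ) < ((k : ℝ) - 1) + ((n : ℝ) - k) / 2 - τ}
        ⊆ {ω : Ω n Q | (∑ u : Fin n, χ hv u ω) ≤ ε} := by
      intro ω hω
      simp only [Set.mem_setOf_eq] at hω ⊢
      rw [deg_eq hv hQcard ω, hQ] at hω
      rw [hεdef, hmR]
      linarith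
    have hch := ProbabilityTheory.measure_le_le_exp_mul_mgf
      (μ := plantedClique n Q) (X := fun ω => ∑ u : Fin n, χ hv u ω) ε ht
      Integrable.of_finite
    rw [mgf_sum_chi hv t] at hch
    have hb1 : ((1 + Real.exp t) / 2) ^ m ≤ Real.exp (t / 2 + t ^ 2 / 8) ^ m := by
      apply pow_le_pow_left₀ (by positivity) (half_one_add_exp_le t)
    have hb2 : Real.exp (t / 2 + t ^ 2 / 8) ^ m = Real.exp ((m : ℝ) * (t / 2 + t ^ 2 / 8)) :=
      (Real.exp_nat_mul _ m).symm
    have harith : -t * ε + (m : ℝ) * (t / 2 + t ^ 2 / 8) = -(2 * τ ^ 2 / m) := by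
      rw [htdef, hεdef]
      field_simp
      ring
    have hexp2 : -(2 * τ ^ 2 / m) ≤ -(2 * Real.log n) := by
      have h1 : (2 * τ ^ 2) / (n : ℝ) ≤ (2 * τ ^ 2) / m := by
        gcongr
      have h2 : (2 * τ ^ 2) / (n : ℝ) = 2 * Real.log n := by
        rw [hττ]; field_simp; try ring
      linarith
    have hfinal : Real.exp (-t * ε) * ((1 + Real.exp t) / 2) ^ m ≤ 1 / (n : ℝ) ^ 2 := by
      calc Real.exp (-t * ε) * ((1 + Real.exp t) / 2) ^ m
          ≤ Real.exp (-t * ε) * Real.exp ((m : ℝ) * (t / 2 + t ^ 2 / 8)) := by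
            exact mul_le_mul_of_nonneg_left (hb1.trans_eq hb2) (Real.exp_pos _).le
        _ = Real.exp (-t * ε + (m : ℝ) * (t / 2 + t ^ 2 / 8)) := (Real.exp_add _ _).symm
        _ = Real.exp (-(2 * τ ^ 2 / m)) := by rw [harith]
        _ ≤ Real.exp (-(2 * Real.log n)) := Real.exp_le_exp.mpr hexp2
        _ = 1 / (n : ℝ) ^ 2 := by
            rw [Real.exp_neg, two_mul, Real.exp_add, Real.exp_log hn0, one_div, pow_two]
    calc plantedClique n Q {ω : Ω n Q |
          (deg Q ω v : ℝ) < ((k : ℝ) - 1) + ((n : ℝ) - k) / 2 - τ}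
        ≤ plantedClique n Q {ω : Ω n Q | (∑ u : Fin n, χ hv u ω) ≤ ε} :=
          measure_mono hsub
      _ = ENNReal.ofReal
            ((plantedClique n Q {ω : Ω n Q | (∑ u : Fin n, χ hv u ω) ≤ ε}).toReal) :=
          (ENNReal.ofReal_toReal (measure_ne_top _ _)).symm
      _ ≤ ENNReal.ofReal (1 / (n : ℝ) ^ 2) :=
          ENNReal.ofReal_le_ofReal (le_trans hch hfinal)

end


theorem clique_vertex_degree_lower (n k : ℕ) (hn : 2 ≤ n) (hk1 : 1 ≤ k) (hkn : k ≤ n)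
    (Q : Finset (Fin n)) (hQ : Q.card = k) :
    plantedClique n Q {ω : Ω n Q | ∃ v ∈ Q,
        (deg Q ω v : ℝ) <
          ((k : ℝ) - 1) + ((n : ℝ) - k) / 2 - Real.sqrt (n * Real.log n)} ≤
      ENNReal.ofReal (1 / n) := by
  classical
  have hn0 : (0:ℝ) < n := by exact_mod_cast Nat.lt_of_lt_of_le Nat.zero_lt_two hn
  have hunion : {ω : Ω n Q | ∃ v ∈ Q,
        (deg Q ω v : ℝ) <
          ((k : ℝ) - 1) + ((n : ℝ) - k) / 2 - Real.sqrt (n * Real.log n)}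
      = ⋃ v ∈ Q, {ω : Ω n Q |
        (deg Q ω v : ℝ) <
          ((k : ℝ) - 1) + ((n : ℝ) - k) / 2 - Real.sqrt (n * Real.log n)} := by
    ext ω; simp
  rw [hunion]
  calc plantedClique n Q (⋃ v ∈ Q, {ω : Ω n Q |
          (deg Q ω v : ℝ) <
            ((k : ℝ) - 1) + ((n : ℝ) - k) / 2 - Real.sqrt (n * Real.log n)})
      ≤ ∑ v ∈ Q, plantedClique n Q {ω : Ω n Q |
          (deg Q ω v : ℝ) <
            ((k : ℝ) - 1) + ((n : ℝ) - k) / 2 - Real.sqrt (n * Real.log n)} :=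
        measure_biUnion_finset_le Q _
    _ ≤ ∑ v ∈ Q, ENNReal.ofReal (1 / (n : ℝ) ^ 2) :=
        Finset.sum_le_sum fun v hv => vertexBound n k hn hk1 hkn Q hQ v hv
    _ = Q.card • ENNReal.ofReal (1 / (n : ℝ) ^ 2) := Finset.sum_const _
    _ ≤ ENNReal.ofReal (1 / n) := by
        rw [hQ, nsmul_eq_mul, ← ENNReal.ofReal_natCast k,
          ← ENNReal.ofReal_mul (by positivity)]
        apply ENNReal.ofReal_le_ofReal
        have hknR : (k : ℝ) ≤ n := by exact_mod_cast hkn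
        rw [mul_one_div, div_le_div_iff₀ (by positivity) hn0]
        nlinarith

end Stmt2
end

section
/- For every cache size k ≥ 1 and every request sequence σ_1,…,σ_m over the pages Fin(k+1), there exists a valid offline schedule C_0, C_1, …, C_m such that any two distinct fault steps i < j satisfy j − i ≥ k (consecutive faults are at least k requests apart). -/
namespace Stmt8

/-- `Cs 0, Cs 1, …, Cs m` is a valid offline schedule of cache states for the
request sequence `σ` with cache size `k`: each state holds at most `k` pages,
each requested page is in the cache right after its request, and the only page
that may enter the cache at step `i` is the requested page `σ i`. -/
def IsValidSchedule (k m : ℕ) (σ : Fin m → Fin (k + 1))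
    (Cs : Fin (m + 1) → Finset (Fin (k + 1))) : Prop :=
  (∀ j : Fin (m + 1), (Cs j).card ≤ k) ∧
    ∀ i : Fin m, σ i ∈ Cs i.succ ∧ Cs i.succ ⊆ Cs i.castSucc ∪ {σ i}

/-- The schedule faults at step `i` if the requested page was not already cached. -/
def FaultAt (k m : ℕ) (σ : Fin m → Fin (k + 1))
    (Cs : Fin (m + 1) → Finset (Fin (k + 1))) (i : Fin m) : Prop :=
  σ i ∉ Cs i.castSucc

end Stmt8

namespace Stmt8

open Classical in
/-- Pages requested at steps `n, …, n+k-1`. -/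
noncomputable def S (k m : ℕ) (σ : Fin m → Fin (k + 1)) (n : ℕ) : Finset (Fin (k + 1)) :=
  (Finset.univ.filter (fun t : Fin m => n ≤ (t : ℕ) ∧ (t : ℕ) < n + k)).image σ

lemma S_card_lt (k m : ℕ) (σ : Fin m → Fin (k + 1)) (n : ℕ) :
    (S k m σ n).card < k + 1 := by
  classical
  have h1 : (S k m σ n).card ≤ (Finset.univ.filter
      (fun t : Fin m => n ≤ (t : ℕ) ∧ (t : ℕ) < n + k)).card :=
    Finset.card_image_le
  have h2 : (Finset.univ.filter
      (fun t : Fin m => n ≤ (t : ℕ) ∧ (t : ℕ) < n + k)).card ≤ (Finset.Ico n (n + k)).card := by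
    refine Finset.card_le_card_of_injOn (fun x : Fin m => (x : ℕ)) ?_ ?_
    · intro t ht
      rw [Finset.mem_coe, Finset.mem_filter] at ht
      simp [Finset.mem_Ico, ht.2.1, ht.2.2]
    · intro a _ b _ hab
      exact Fin.val_injective hab
  have h3 : (Finset.Ico n (n + k)).card = k := by simp
  omega

lemma exists_not_mem_S (k m : ℕ) (σ : Fin m → Fin (k + 1)) (n : ℕ) :
    ∃ h : Fin (k + 1), h ∉ S k m σ n := by
  by_contra hc
  push_neg at hc
  have heq : S k m σ n = Finset.univ := Finset.eq_univ_iff_forall.mpr hc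
  have hlt := S_card_lt k m σ n
  rw [heq] at hlt
  simp [Finset.card_univ] at hlt

noncomputable def pick (k m : ℕ) (σ : Fin m → Fin (k + 1)) (n : ℕ) : Fin (k + 1) :=
  (exists_not_mem_S k m σ n).choose

lemma pick_not_mem (k m : ℕ) (σ : Fin m → Fin (k + 1)) (n : ℕ) :
    pick k m σ n ∉ S k m σ n :=
  (exists_not_mem_S k m σ n).choose_spec

open Classical in
noncomputable def hole (k m : ℕ) (σ : Fin m → Fin (k + 1)) : ℕ → Fin (k + 1)
  | 0 => 0
  | n + 1 =>
      if (∃ hn : n < m, σ ⟨n, hn⟩ = hole k m σ n) then pick k m σ n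
      else hole k m σ n


lemma mem_S (k m : ℕ) (σ : Fin m → Fin (k + 1)) {n t : ℕ} (ht : t < m)
    (h1 : n ≤ t) (h2 : t < n + k) : σ ⟨t, ht⟩ ∈ S k m σ n := by
  classical
  unfold S
  apply Finset.mem_image_of_mem
  simp [h1, h2]

lemma hole_succ_fault (k m : ℕ) (σ : Fin m → Fin (k + 1)) {n : ℕ} (hn : n < m)
    (hf : σ ⟨n, hn⟩ = hole k m σ n) : hole k m σ (n + 1) = pick k m σ n := by
  rw [hole]
  rw [if_pos ⟨hn, hf⟩]

lemma hole_succ_nofault (k m : ℕ) (σ : Fin m → Fin (k + 1)) {n : ℕ} (hn : n < m)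
    (hf : σ ⟨n, hn⟩ ≠ hole k m σ n) : hole k m σ (n + 1) = hole k m σ n := by
  rw [hole]
  rw [if_neg]
  rintro ⟨hn', hf'⟩
  exact hf hf'

lemma window (k m : ℕ) (σ : Fin m → Fin (k + 1)) {i : ℕ} (hi : i < m)
    (hf : σ ⟨i, hi⟩ = hole k m σ i) :
    ∀ d, 1 ≤ d → d < k → i + d < m → hole k m σ (i + d) = pick k m σ i := by
  intro d
  induction d with
  | zero => omega
  | succ d ih =>
    intro _ hdk hm
    rcases Nat.eq_zero_or_pos d with h0 | hpos
    · subst h0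
      exact hole_succ_fault k m σ hi hf
    · have hdm : i + d < m := by omega
      have ihd : hole k m σ (i + d) = pick k m σ i := ih hpos (by omega) hdm
      have hmem : σ ⟨i + d, hdm⟩ ∈ S k m σ i := mem_S k m σ hdm (by omega) (by omega)
      have hne : σ ⟨i + d, hdm⟩ ≠ hole k m σ (i + d) := by
        rw [ihd]
        intro h
        exact pick_not_mem k m σ i (h ▸ hmem)
      rw [show i + (d + 1) = (i + d) + 1 by ring,
        hole_succ_nofault k m σ hdm hne, ihd]


theorem exists_schedule_with_spread_faults (k : ℕ) (hk : 1 ≤ k) (m : ℕ)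
    (σ : Fin m → Fin (k + 1)) :
    ∃ Cs : Fin (m + 1) → Finset (Fin (k + 1)),
      IsValidSchedule k m σ Cs ∧
        ∀ i j : Fin m, FaultAt k m σ Cs i → FaultAt k m σ Cs j → i < j →
          k ≤ (j : ℕ) - (i : ℕ) := by
  classical
  refine ⟨fun j => ({hole k m σ (j : ℕ)} : Finset (Fin (k + 1)))ᶜ, ⟨?_, ?_⟩, ?_⟩
  · intro j
    rw [Finset.card_compl]
    simp
  · intro i
    have hi : (i : ℕ) < m := i.isLt
    have heta : (⟨(i : ℕ), hi⟩ : Fin m) = i := by ext; rfl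
    constructor
    · simp only [Finset.mem_compl, Finset.mem_singleton, Fin.val_succ]
      by_cases hf : σ i = hole k m σ (i : ℕ)
      · rw [hole_succ_fault k m σ hi (by rw [heta]; exact hf)]
        intro h
        have hmem : σ ⟨(i : ℕ), hi⟩ ∈ S k m σ (i : ℕ) :=
          mem_S k m σ hi (le_refl _) (by omega)
        rw [heta, h] at hmem
        exact pick_not_mem k m σ (i : ℕ) hmem
      · rw [hole_succ_nofault k m σ hi (by rw [heta]; exact hf)]
        exact hf
    · intro x hx
      simp only [Finset.mem_compl, Finset.mem_singleton, Fin.val_succ] at hx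
      simp only [Finset.mem_union, Finset.mem_compl, Finset.mem_singleton, Fin.coe_castSucc]
      by_cases hf : σ i = hole k m σ (i : ℕ)
      · by_cases hx2 : x = hole k m σ (i : ℕ)
        · right; rw [hx2, hf]
        · left; exact hx2
      · left
        rw [hole_succ_nofault k m σ hi (by rw [heta]; exact hf)] at hx
        exact hx
  · intro i j hfi hfj hij
    simp only [FaultAt, Finset.mem_compl, Finset.mem_singleton, Fin.coe_castSucc,
      not_not] at hfi hfj
    by_contra hlt
    push_neg at hlt
    have hi : (i : ℕ) < m := i.isLt
    have hj : (j : ℕ) < m := j.isLt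
    have hd1 : 1 ≤ (j : ℕ) - (i : ℕ) := by
      have : (i : ℕ) < (j : ℕ) := hij
      omega
    have heta : (⟨(i : ℕ), hi⟩ : Fin m) = i := by ext; rfl
    have hij' : (i : ℕ) < (j : ℕ) := hij
    have hw := window k m σ hi (by rw [heta]; exact hfi) ((j : ℕ) - (i : ℕ)) hd1
      (by omega) (by omega)
    have hjd : (i : ℕ) + ((j : ℕ) - (i : ℕ)) = (j : ℕ) := by omega
    rw [hjd] at hw
    have hmem : σ ⟨(j : ℕ), hj⟩ ∈ S k m σ (i : ℕ) := mem_S k m σ hj (by omega) (by omega)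
    have hetj : (⟨(j : ℕ), hj⟩ : Fin m) = j := by ext; rfl
    rw [hetj, hfj, hw] at hmem
    exact pick_not_mem k m σ (i : ℕ) hmem


end Stmt8
end

section
/- For every cache size k ≥ 1 and every request sequence σ_1,…,σ_m over the pages Fin(k+1), there exists a valid offline schedule C_0, C_1, …, C_m with at most ⌈m/k⌉ faults. -/
namespace Stmt9

/-- `Cs 0, Cs 1, …, Cs m` is a valid offline schedule of cache states for the
request sequence `σ` with cache size `k`: each state holds at most `k` pages,
each requested page is in the cache right after its request, and the only page
that may enter the cache at step `i` is the requested page `σ i`. -/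
def IsValidSchedule (k m : ℕ) (σ : Fin m → Fin (k + 1))
    (Cs : Fin (m + 1) → Finset (Fin (k + 1))) : Prop :=
  (∀ j : Fin (m + 1), (Cs j).card ≤ k) ∧
    ∀ i : Fin m, σ i ∈ Cs i.succ ∧ Cs i.succ ⊆ Cs i.castSucc ∪ {σ i}

/-- The schedule faults at step `i` if the requested page was not already cached. -/
def FaultAt (k m : ℕ) (σ : Fin m → Fin (k + 1))
    (Cs : Fin (m + 1) → Finset (Fin (k + 1))) (i : Fin m) : Prop :=
  σ i ∉ Cs i.castSucc

end Stmt9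

namespace Stmt9

open scoped Classical

noncomputable section Aux

/-- Extension of the request sequence to all of `ℕ`. -/
def sig (k m : ℕ) (σ : Fin m → Fin (k + 1)) (t : ℕ) : Fin (k + 1) :=
  if h : t < m then σ ⟨t, h⟩ else 0

lemma exists_avoid (k m : ℕ) (σ : Fin m → Fin (k + 1)) (j : ℕ) :
    ∃ p : Fin (k + 1), ∀ t, j ≤ t → t < j + k → sig k m σ t ≠ p := by
  have hcard : ((Finset.Ico j (j + k)).image (sig k m σ)).card <
      (Finset.univ : Finset (Fin (k + 1))).card := by
    refine lt_of_le_of_lt Finset.card_image_le ?_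
    simp
  by_contra h
  push_neg at h
  have hsub : (Finset.univ : Finset (Fin (k + 1))) ⊆
      (Finset.Ico j (j + k)).image (sig k m σ) := by
    intro p _
    obtain ⟨t, ht1, ht2, ht3⟩ := h p
    exact Finset.mem_image.2 ⟨t, Finset.mem_Ico.2 ⟨ht1, ht2⟩, ht3⟩
  exact absurd (Finset.card_le_card hsub) (not_le.2 hcard)

/-- A page not requested in the window `[j, j+k)`. -/
def avoid (k m : ℕ) (σ : Fin m → Fin (k + 1)) (j : ℕ) : Fin (k + 1) :=
  (exists_avoid k m σ j).choose

lemma avoid_spec (k m : ℕ) (σ : Fin m → Fin (k + 1)) (j : ℕ) :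
    ∀ t, j ≤ t → t < j + k → sig k m σ t ≠ avoid k m σ j :=
  (exists_avoid k m σ j).choose_spec

/-- The page missing from the cache at time `j`. -/
def miss (k m : ℕ) (σ : Fin m → Fin (k + 1)) : ℕ → Fin (k + 1)
  | 0 => avoid k m σ 0
  | j + 1 =>
    if sig k m σ j = miss k m σ j then avoid k m σ j else miss k m σ j

variable {k m : ℕ} (hk : 1 ≤ k) (σ : Fin m → Fin (k + 1))

include hk

lemma miss_stable (j : ℕ) (hf : sig k m σ j = miss k m σ j) :
    ∀ d, 1 ≤ d → d ≤ k → miss k m σ (j + d) = avoid k m σ j := by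
  intro d
  induction d with
  | zero => omega
  | succ d ih =>
    intro _ hdk
    rcases Nat.eq_zero_or_pos d with hd | hd
    · subst hd
      show miss k m σ (j + 1) = _
      simp [miss, hf]
    · have h1 : miss k m σ (j + d) = avoid k m σ j := ih hd (by omega)
      have h2 : sig k m σ (j + d) ≠ avoid k m σ j :=
        avoid_spec k m σ j (j + d) (by omega) (by omega)
      have : j + (d + 1) = (j + d) + 1 := by omega
      rw [this]
      show (if sig k m σ (j + d) = miss k m σ (j + d) then _ else _) = _
      rw [h1, if_neg h2]

lemma nofault_between (j : ℕ) (hf : sig k m σ j = miss k m σ j)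
    (d : ℕ) (hd1 : 1 ≤ d) (hdk : d < k) :
    sig k m σ (j + d) ≠ miss k m σ (j + d) := by
  rw [miss_stable hk σ j hf d hd1 (by omega)]
  exact avoid_spec k m σ j (j + d) (by omega) (by omega)

lemma miss_early : ∀ t, t ≤ k → miss k m σ t = avoid k m σ 0 := by
  intro t
  induction t with
  | zero => intro _; rfl
  | succ t ih =>
    intro ht
    have h1 : miss k m σ t = avoid k m σ 0 := ih (by omega)
    have h2 : sig k m σ t ≠ avoid k m σ 0 :=
      avoid_spec k m σ 0 t (by omega) (by omega)
    show (if sig k m σ t = miss k m σ t then _ else _) = _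
    rw [h1, if_neg h2]

lemma nofault_early (t : ℕ) (ht : t < k) :
    sig k m σ t ≠ miss k m σ t := by
  rw [miss_early hk σ t (by omega)]
  exact avoid_spec k m σ 0 t (by omega) (by omega)

lemma fault_gap (i i' : ℕ) (hlt : i < i')
    (hf : sig k m σ i = miss k m σ i) (hf' : sig k m σ i' = miss k m σ i') :
    i + k ≤ i' := by
  by_contra h
  exact nofault_between hk σ i hf (i' - i) (by omega) (by omega)
    (by rw [Nat.add_sub_cancel' (le_of_lt hlt)]; exact hf')

end Aux

theorem exists_schedule_with_few_faults (k : ℕ) (hk : 1 ≤ k) (m : ℕ)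
    (σ : Fin m → Fin (k + 1)) :
    ∃ Cs : Fin (m + 1) → Finset (Fin (k + 1)),
      IsValidSchedule k m σ Cs ∧
        (Finset.univ.filter fun i : Fin m => FaultAt k m σ Cs i).card ≤ m ⌈/⌉ k := by
  refine ⟨fun j => Finset.univ.erase (miss k m σ j.val), ⟨?_, ?_⟩, ?_⟩
  · intro j
    show (Finset.univ.erase (miss k m σ j.val)).card ≤ k
    rw [Finset.card_erase_of_mem (Finset.mem_univ _), Finset.card_univ,
      Fintype.card_fin]
    omega
  · intro i
    have hsig : sig k m σ i.val = σ i := by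
      simp [sig, i.isLt]
    have hsucc : (i.succ : Fin (m + 1)).val = i.val + 1 := rfl
    have hcast : (i.castSucc : Fin (m + 1)).val = i.val := rfl
    constructor
    · show σ i ∈ Finset.univ.erase (miss k m σ (i.succ : Fin (m + 1)).val)
      rw [hsucc]
      refine Finset.mem_erase.2 ⟨?_, Finset.mem_univ _⟩
      show σ i ≠ miss k m σ (i.val + 1)
      by_cases hf : sig k m σ i.val = miss k m σ i.val
      · have : miss k m σ (i.val + 1) = avoid k m σ i.val := by
          show (if _ then _ else _) = _
          rw [if_pos hf]
        rw [this, ← hsig]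
        exact avoid_spec k m σ i.val i.val le_rfl (by omega)
      · have : miss k m σ (i.val + 1) = miss k m σ i.val := by
          show (if _ then _ else _) = _
          rw [if_neg hf]
        rw [this, ← hsig]; exact hf
    · intro x hx
      replace hx : x ∈ Finset.univ.erase (miss k m σ (i.val + 1)) := hx
      show x ∈ Finset.univ.erase (miss k m σ (i.castSucc : Fin (m + 1)).val) ∪ {σ i}
      rw [hcast]
      by_cases hf : sig k m σ i.val = miss k m σ i.val
      · rcases eq_or_ne x (miss k m σ i.val) with hxm | hxm
        · exact Finset.mem_union_right _ (by
            simp [hxm, ← hf, hsig])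
        · exact Finset.mem_union_left _
            (Finset.mem_erase.2 ⟨hxm, Finset.mem_univ _⟩)
      · have : miss k m σ (i.val + 1) = miss k m σ i.val := by
          show (if _ then _ else _) = _
          rw [if_neg hf]
        rw [this] at hx
        exact Finset.mem_union_left _ hx
  · have hFault : ∀ i : Fin m,
        (FaultAt k m σ (fun j => Finset.univ.erase (miss k m σ j.val)) i ↔
          sig k m σ i.val = miss k m σ i.val) := by
      intro i
      have hsig : sig k m σ i.val = σ i := by simp [sig, i.isLt]
      have hcast : (i.castSucc : Fin (m + 1)).val = i.val := rfl
      unfold FaultAt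
      show σ i ∉ Finset.univ.erase (miss k m σ (i.castSucc : Fin (m + 1)).val) ↔ _
      rw [hcast, ← hsig]
      simp [Finset.mem_erase]
    set F := Finset.univ.filter fun i : Fin m =>
      FaultAt k m σ (fun j => Finset.univ.erase (miss k m σ j.val)) i with hF
    have hmemF : ∀ i ∈ F, sig k m σ i.val = miss k m σ i.val := by
      intro i hi
      exact (hFault i).1 (Finset.mem_filter.1 hi).2
    have hcard : F.card ≤ (Finset.Icc 1 ((m - 1) / k)).card := by
      refine Finset.card_le_card_of_injOn (fun i => i.val / k) ?_ ?_
      · intro i hi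
        have hfi := hmemF i hi
        have hik : k ≤ i.val := by
          by_contra h
          exact nofault_early hk σ i.val (by omega) hfi
        refine Finset.mem_Icc.2 ⟨?_, ?_⟩
        · exact (Nat.one_le_div_iff (by omega)).2 hik
        · exact Nat.div_le_div_right (by omega)
      · intro i hi i' hi' hEq
        replace hEq : i.val / k = i'.val / k := hEq
        by_contra hne
        rcases Ne.lt_or_gt (fun h : i = i' => hne h) with hlt | hlt
        · have := fault_gap hk σ i.val i'.val hlt (hmemF i hi) (hmemF i' hi')
          have : i.val / k + 1 ≤ i'.val / k := by
            calc i.val / k + 1 = (i.val + k) / k := by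
                  rw [Nat.add_div_right _ (by omega)]
            _ ≤ i'.val / k := Nat.div_le_div_right this
          omega
        · have := fault_gap hk σ i'.val i.val hlt (hmemF i' hi') (hmemF i hi)
          have : i'.val / k + 1 ≤ i.val / k := by
            calc i'.val / k + 1 = (i'.val + k) / k := by
                  rw [Nat.add_div_right _ (by omega)]
            _ ≤ i.val / k := Nat.div_le_div_right this
          omega
    have hIcc : (Finset.Icc 1 ((m - 1) / k)).card = (m - 1) / k := by
      rw [Nat.card_Icc]; exact Nat.add_sub_cancel _ _
    have hle : (m - 1) / k ≤ m ⌈/⌉ k := by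
      rw [Nat.ceilDiv_eq_add_pred_div]
      exact Nat.div_le_div_right (by omega)
    omega
end Stmt9
end

section
/- For every cache size k ≥ 1, every deterministic online paging policy C over the k+1 pages Fin(k+1), and every m ≥ 1, there exists a request sequence σ_1,…,σ_m on which the policy faults at all m steps, while some valid offline schedule for the same sequence faults at most ⌈m/k⌉ times. (Thus the worst-case fault rate of every deterministic policy is 100%, even though the optimal clairvoyant policy's fault rate is at most 1/k.) -/
namespace Stmt10

/-- `Cs 0, Cs 1, …, Cs m` is a valid offline schedule of cache states for the
request sequence `σ` with cache size `k`: each state holds at most `k` pages,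
each requested page is in the cache right after its request, and the only page
that may enter the cache at step `i` is the requested page `σ i`. -/
def IsValidSchedule (k m : ℕ) (σ : Fin m → Fin (k + 1))
    (Cs : Fin (m + 1) → Finset (Fin (k + 1))) : Prop :=
  (∀ j : Fin (m + 1), (Cs j).card ≤ k) ∧
    ∀ i : Fin m, σ i ∈ Cs i.succ ∧ Cs i.succ ⊆ Cs i.castSucc ∪ {σ i}

/-- The schedule faults at step `i` if the requested page was not already cached. -/
def FaultAt (k m : ℕ) (σ : Fin m → Fin (k + 1))
    (Cs : Fin (m + 1) → Finset (Fin (k + 1))) (i : Fin m) : Prop :=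
  σ i ∉ Cs i.castSucc

end Stmt10

namespace Stmt10

open scoped Classical


noncomputable def avoid (k : ℕ) (s : Finset (Fin (k + 1))) : Fin (k + 1) :=
  if h : sᶜ.Nonempty then sᶜ.min' h else ⟨0, Nat.succ_pos k⟩

lemma avoid_not_mem (k : ℕ) (s : Finset (Fin (k + 1))) (h : s.card ≤ k) :
    avoid k s ∉ s := by
  have hne : sᶜ.Nonempty := by
    rw [← Finset.card_pos, Finset.card_compl]
    simp only [Fintype.card_fin]
    omega
  rw [avoid, dif_pos hne]
  have := Finset.min'_mem sᶜ hne
  simpa using this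

noncomputable def reqs (k : ℕ) (C : List (Fin (k + 1)) → Finset (Fin (k + 1))) :
    ℕ → List (Fin (k + 1))
  | 0 => []
  | n + 1 => reqs k C n ++ [avoid k (C (reqs k C n))]

noncomputable def req (k : ℕ) (C : List (Fin (k + 1)) → Finset (Fin (k + 1))) (n : ℕ) :
    Fin (k + 1) := avoid k (C (reqs k C n))

lemma reqs_eq_ofFn (k C) : ∀ n, reqs k C n = List.ofFn (fun j : Fin n => req k C j)
  | 0 => rfl
  | n + 1 => by
    rw [List.ofFn_succ']
    rw [reqs, reqs_eq_ofFn k C n]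
    simp [req, List.concat_eq_append, reqs_eq_ofFn k C n]

lemma reqs_length (k C) : ∀ n, (reqs k C n).length = n
  | 0 => rfl
  | n + 1 => by rw [reqs]; simp [reqs_length k C n]

lemma reqs_take (k C) : ∀ n i, i ≤ n → (reqs k C n).take i = reqs k C i := by
  intro n
  induction n with
  | zero => intro i hi; interval_cases i; rfl
  | succ n ih =>
    intro i hi
    rcases Nat.lt_or_ge i (n + 1) with h | h
    · rw [reqs, List.take_append_of_le_length (by rw [reqs_length]; omega)]
      exact ih i (by omega)
    · have : i = n + 1 := by omega
      subst this
      exact List.take_of_length_le (by rw [reqs_length])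

def be (k t : ℕ) : ℕ := (t / k + 1) * k

noncomputable def reh (k : ℕ) (C : List (Fin (k + 1)) → Finset (Fin (k + 1))) (t : ℕ) :
    Fin (k + 1) := avoid k ((Finset.Ico t (be k t)).image (req k C))

noncomputable def hole (k : ℕ) (C : List (Fin (k + 1)) → Finset (Fin (k + 1))) :
    ℕ → Fin (k + 1)
  | 0 => reh k C 0
  | t + 1 => if req k C t = hole k C t then reh k C t else hole k C t

lemma be_eq (k t : ℕ) : be k t = t / k * k + k := by
  simp only [be]; ring

lemma be_sub (k t : ℕ) : be k t - t ≤ k := by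
  have := Nat.div_mul_le_self t k
  rw [be_eq]; omega

lemma lt_be (k t : ℕ) (hk : 1 ≤ k) : t < be k t := by
  have h1 := Nat.div_add_mod t k
  have h2 : t % k < k := Nat.mod_lt _ hk
  have h3 : t / k * k = k * (t / k) := Nat.mul_comm _ _
  rw [be_eq]; omega

lemma lt_be_of_div_eq (k t j : ℕ) (hk : 1 ≤ k) (h : j / k = t / k) : j < be k t := by
  have h1 := Nat.div_add_mod j k
  have h2 : j % k < k := Nat.mod_lt _ hk
  have h3 : j / k * k = k * (j / k) := Nat.mul_comm _ _
  rw [be_eq, ← h]; omega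

lemma reh_ne (k C) (t j : ℕ) (h1 : t ≤ j) (h2 : j < be k t) : req k C j ≠ reh k C t := by
  intro h
  apply avoid_not_mem k ((Finset.Ico t (be k t)).image (req k C))
    (le_trans Finset.card_image_le (by rw [Nat.card_Ico]; exact be_sub k t))
  rw [← reh, ← h]
  exact Finset.mem_image_of_mem _ (Finset.mem_Ico.2 ⟨h1, h2⟩)

lemma hole_key (k C) (a b : ℕ) (hab : b ≤ a) (h : hole k C a = reh k C b) :
    ∀ j, a ≤ j → j < be k b → hole k C j = reh k C b := by
  intro j haj
  induction j, haj using Nat.le_induction with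
  | base => intro _; exact h
  | succ j hj ih =>
    intro hjb
    have hj' : j < be k b := by omega
    have hih := ih hj'
    rw [hole, if_neg, hih]
    rw [hih]
    exact reh_ne k C b j (by omega) hj'

lemma no_fault_of (k C) (a b : ℕ) (hab : b ≤ a) (h : hole k C a = reh k C b)
    (j : ℕ) (haj : a ≤ j) (hjb : j < be k b) : req k C j ≠ hole k C j := by
  rw [hole_key k C a b hab h j haj hjb]
  exact reh_ne k C b j (by omega) hjb

lemma no_fault_block0 (k C) (j : ℕ) (hj : j < k) : req k C j ≠ hole k C j := by
  apply no_fault_of k C 0 0 le_rfl rfl j (Nat.zero_le _)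
  simp [be, Nat.zero_div]; omega

lemma no_fault_spread (k C) (t j : ℕ) (hf : req k C t = hole k C t)
    (h1 : t < j) (h2 : j < be k t) : req k C j ≠ hole k C j := by
  apply no_fault_of k C (t + 1) t (by omega) _ j (by omega) h2
  rw [hole, if_pos hf]


theorem online_faults_always_offline_rarely (k : ℕ) (hk : 1 ≤ k)
    (C : List (Fin (k + 1)) → Finset (Fin (k + 1)))
    (hC : ∀ h : List (Fin (k + 1)), (C h).card ≤ k)
    (m : ℕ) (hm : 1 ≤ m) :
    ∃ σ : Fin m → Fin (k + 1),
      (∀ i : Fin m, σ i ∉ C ((List.ofFn σ).take i)) ∧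
        ∃ Cs : Fin (m + 1) → Finset (Fin (k + 1)),
          IsValidSchedule k m σ Cs ∧
            (Finset.univ.filter fun i : Fin m => FaultAt k m σ Cs i).card ≤ m ⌈/⌉ k := by
  refine ⟨fun i => req k C i, ?_, fun t => ({hole k C t.val} : Finset (Fin (k+1)))ᶜ, ⟨?_, ?_⟩, ?_⟩
  · intro i
    have hofn : List.ofFn (fun i : Fin m => req k C i) = reqs k C m :=
      (reqs_eq_ofFn k C m).symm
    rw [hofn, reqs_take k C m i.val (le_of_lt i.isLt)]
    exact avoid_not_mem k _ (hC _)
  · intro j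
    rw [Finset.card_compl, Finset.card_singleton, Fintype.card_fin]
    omega
  · intro i
    constructor
    · rw [Finset.mem_compl, Finset.mem_singleton, Fin.val_succ]
      by_cases hf : req k C i.val = hole k C i.val
      · rw [hole, if_pos hf]
        exact reh_ne k C i.val i.val le_rfl (lt_be k i.val hk)
      · rw [hole, if_neg hf]
        exact hf
    · intro x hx
      rw [Finset.mem_compl, Finset.mem_singleton, Fin.val_succ] at hx
      rw [Finset.mem_union, Finset.mem_compl, Finset.mem_singleton,
        Finset.mem_singleton, Fin.coe_castSucc]
      by_cases hxs : x = req k C i.val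
      · exact Or.inr hxs
      · left
        by_cases hf : req k C i.val = hole k C i.val
        · rw [← hf]; exact hxs
        · rw [hole, if_neg hf] at hx; exact hx
  · have hfault : ∀ i : Fin m,
        (FaultAt k m (fun i => req k C i.val)
          (fun t => ({hole k C t.val} : Finset (Fin (k+1)))ᶜ) i) ↔
          req k C i.val = hole k C i.val := by
      intro i
      simp [FaultAt, Fin.coe_castSucc]
    have hceil : m ⌈/⌉ k = (m - 1) / k + 1 := by
      rw [Nat.ceilDiv_eq_add_pred_div]
      have : m + k - 1 = (m - 1) + k := by omega
      rw [this, Nat.add_div_right _ (by omega)]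
    calc (Finset.univ.filter fun i : Fin m => FaultAt k m (fun i => req k C i.val)
            (fun t => ({hole k C t.val} : Finset (Fin (k+1)))ᶜ) i).card
        ≤ (Finset.range (m ⌈/⌉ k)).card := by
          apply Finset.card_le_card_of_injOn (fun i : Fin m => i.val / k)
          · intro i _
            simp only [Finset.mem_coe, Finset.mem_range, hceil]
            have : i.val / k ≤ (m - 1) / k :=
              Nat.div_le_div_right (by omega)
            omega
          · intro i hi j hj hij
            rw [Finset.mem_coe, Finset.mem_filter, hfault] at hi hj
            by_contra hne
            have hne' : i.val ≠ j.val := fun h => hne (Fin.ext h)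
            rcases Nat.lt_or_ge i.val j.val with h | h
            · exact no_fault_spread k C i.val j.val hi.2 h
                (lt_be_of_div_eq k i.val j.val hk hij.symm) hj.2
            · have h' : j.val < i.val := by omega
              exact no_fault_spread k C j.val i.val hj.2 h'
                (lt_be_of_div_eq k j.val i.val hk hij) hi.2
      _ = m ⌈/⌉ k := Finset.card_range _

end Stmt10
end

section
/- Let (V,w) be a weighted max-cut instance on a finite set V with |V| ≥ 2 in which every unordered pair of distinct vertices has strictly positive weight (a complete weighted graph), let γ > 1, and let S* be a subset of V with ∅ ⊊ S* ⊊ V such that for every γ-perturbation w' of w, S* maximizes cut_{w'} over all subsets of V. Then the maximum cut of the unperturbed instance is unique up to complementation: every subset S ⊆ V maximizing cut_w satisfies S = S* or S = V∖S*. -/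
namespace Stmt12

open scoped Classical

noncomputable section

variable {V : Type*} [Fintype V] [DecidableEq V]

/-- The unordered pair `p` crosses the cut `(S, Sᶜ)`: one endpoint is in `S`
and the other is not. -/
def Crosses (S : Finset V) (p : Sym2 V) : Prop :=
  ∃ u v : V, p = s(u, v) ∧ u ∈ S ∧ v ∉ S

/-- The value of the cut `(S, Sᶜ)` under the weights `w`: the total weight of the
unordered pairs with one endpoint in `S` and the other outside `S`. -/
def cutVal (w : Sym2 V → ℝ) (S : Finset V) : ℝ :=
  ∑ p ∈ Finset.univ.filter (Crosses S), w p

/-- `w'` is a `γ`-perturbation of `w`: every weight is scaled by a factor in `[1, γ]`. -/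
def IsPerturbation (γ : ℝ) (w w' : Sym2 V → ℝ) : Prop :=
  ∀ e : Sym2 V, ∃ α : ℝ, 1 ≤ α ∧ α ≤ γ ∧ w' e = α * w e

/-- `(V, w)` is `γ`-perturbation stable with optimal cut `S*`: for every
`γ`-perturbation `w'` of `w`, every cut whose `w'`-value is at least that of `S*`
is `S*` itself or its complement. -/
def PerturbationStable (γ : ℝ) (w : Sym2 V → ℝ) (Sstar : Finset V) : Prop :=
  ∀ w' : Sym2 V → ℝ, IsPerturbation γ w w' →
    ∀ S : Finset V, cutVal w' Sstar ≤ cutVal w' S → S = Sstar ∨ S = Sstarᶜ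

end

end Stmt12

namespace Stmt12

open scoped Classical

lemma crosses_iff {V : Type*} [DecidableEq V] {S : Finset V} {u v : V} :
    Crosses S s(u, v) ↔ (u ∈ S ∧ v ∉ S) ∨ (v ∈ S ∧ u ∉ S) := by
  constructor
  · rintro ⟨a, b, h, ha, hb⟩
    rw [Sym2.eq_iff] at h
    rcases h with ⟨rfl, rfl⟩ | ⟨rfl, rfl⟩ <;> tauto
  · rintro (⟨h1, h2⟩ | ⟨h1, h2⟩)
    · exact ⟨u, v, rfl, h1, h2⟩
    · exact ⟨v, u, Sym2.eq_swap.symm, h1, h2⟩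

lemma crosses_not_isDiag {V : Type*} [DecidableEq V] {S : Finset V} {p : Sym2 V}
    (h : Crosses S p) : ¬ p.IsDiag := by
  obtain ⟨u, v, rfl, hu, hv⟩ := h
  rw [Sym2.mk_isDiag_iff]
  rintro rfl; exact hv hu

theorem stable_implies_unique_max_cut {V : Type*} [Fintype V] [DecidableEq V]
    (hV : 2 ≤ Fintype.card V)
    (w : Sym2 V → ℝ) (hw : ∀ e : Sym2 V, 0 ≤ w e)
    (hpos : ∀ e : Sym2 V, ¬ e.IsDiag → 0 < w e)
    (γ : ℝ) (hγ : 1 < γ) (Sstar : Finset V)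
    (hne : Sstar.Nonempty) (hproper : Sstar ≠ Finset.univ)
    (hopt : ∀ w' : Sym2 V → ℝ, IsPerturbation γ w w' →
      ∀ S : Finset V, cutVal w' S ≤ cutVal w' Sstar) :
    ∀ S : Finset V, (∀ S' : Finset V, cutVal w S' ≤ cutVal w S) →
      S = Sstar ∨ S = Sstarᶜ := by
  classical
  intro S hS
  have hγ0 : (0:ℝ) < γ - 1 := by linarith
  -- w is a γ-perturbation of itself
  have hpid : IsPerturbation γ w w := fun e => ⟨1, le_refl 1, hγ.le, (one_mul _).symm⟩
  have heq : cutVal w S = cutVal w Sstar := le_antisymm (hopt w hpid S) (hS Sstar)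
  -- the perturbation scaling edges crossing S by γ
  set w' : Sym2 V → ℝ := fun p => if Crosses S p then γ * w p else w p with hw'
  have hpert : IsPerturbation γ w w' := by
    intro e
    by_cases h : Crosses S e
    · exact ⟨γ, hγ.le, le_refl γ, by simp [hw', h]⟩
    · exact ⟨1, le_refl 1, hγ.le, by simp [hw', h]⟩
  set A : Finset (Sym2 V) := Finset.univ.filter (Crosses S) with hA
  set B : Finset (Sym2 V) := Finset.univ.filter (Crosses Sstar) with hB
  have hS' : cutVal w' S = γ * cutVal w S := by
    rw [cutVal, cutVal, Finset.mul_sum]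
    refine Finset.sum_congr rfl fun p hp => ?_
    rw [Finset.mem_filter] at hp
    simp [hw', hp.2]
  have hsplit : cutVal w' Sstar
      = γ * (∑ p ∈ B.filter (Crosses S), w p) + ∑ p ∈ B.filter (fun p => ¬ Crosses S p), w p := by
    rw [cutVal, ← hB, Finset.sum_ite, Finset.mul_sum]
  set c : ℝ := ∑ p ∈ B.filter (Crosses S), w p with hc
  set d : ℝ := ∑ p ∈ B.filter (fun p => ¬ Crosses S p), w p with hd
  have hbcd : cutVal w Sstar = c + d := by
    rw [cutVal, ← hB, hc, hd, Finset.sum_filter_add_sum_filter_not]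
  have hineq : γ * cutVal w S ≤ γ * c + d := by
    rw [← hS', ← hsplit]; exact hopt w' hpert S
  -- c ≤ cutVal w S since B.filter (Crosses S) ⊆ A
  have hsub : B.filter (Crosses S) ⊆ A := by
    intro p hp
    rw [Finset.mem_filter] at hp
    rw [hA, Finset.mem_filter]
    exact ⟨Finset.mem_univ p, hp.2⟩
  have hcle : c ≤ cutVal w S := by
    rw [cutVal, ← hA, hc]
    exact Finset.sum_le_sum_of_subset_of_nonneg hsub (fun p _ _ => hw p)
  have hac : cutVal w S = c := by nlinarith [heq, hbcd, hineq, hcle]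
  have hd0 : d = 0 := by linarith [heq, hbcd]
  -- every pair in B not crossing S would have positive weight, contradiction with d = 0
  have hBA : ∀ p ∈ B, Crosses S p := by
    intro p hp
    by_contra hcon
    have hmem : p ∈ B.filter (fun q => ¬ Crosses S q) := Finset.mem_filter.mpr ⟨hp, hcon⟩
    have hposp : 0 < w p := hpos p (crosses_not_isDiag (Finset.mem_filter.mp hp).2)
    have : 0 < d := by
      rw [hd]
      exact Finset.sum_pos' (fun q _ => hw q) ⟨p, hmem, hposp⟩
    linarith
  -- conversely every pair crossing S crosses Sstar
  have hAB : ∀ p ∈ A, Crosses Sstar p := by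
    intro p hp
    by_contra hcon
    -- then A.filter (Crosses Sstar) is a proper subset missing p, but sums coincide
    have hsub2 : B.filter (Crosses S) ⊆ A.erase p := by
      intro q hq
      rw [Finset.mem_erase]
      refine ⟨?_, hsub hq⟩
      rintro rfl
      exact hcon (Finset.mem_filter.mp (Finset.mem_filter.mp hq).1).2
    have : c ≤ ∑ q ∈ A.erase p, w q :=
      Finset.sum_le_sum_of_subset_of_nonneg hsub2 (fun q _ _ => hw q)
    have hposp : 0 < w p := hpos p (crosses_not_isDiag (Finset.mem_filter.mp hp).2)
    have hsum : ∑ q ∈ A.erase p, w q = cutVal w S - w p := by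
      rw [cutVal, ← hA, Finset.sum_erase_eq_sub hp]
    rw [hsum] at this
    linarith [hac]
  have hkey : ∀ p : Sym2 V, Crosses S p ↔ Crosses Sstar p := by
    intro p
    constructor
    · intro h; exact hAB p (Finset.mem_filter.mpr ⟨Finset.mem_univ p, h⟩)
    · intro h; exact hBA p (Finset.mem_filter.mpr ⟨Finset.mem_univ p, h⟩)
  -- combinatorial finish
  obtain ⟨a, ha⟩ := hne
  obtain ⟨b, hb⟩ : ∃ b, b ∉ Sstar := by
    by_contra hcon
    push_neg at hcon
    exact hproper (Finset.eq_univ_iff_forall.mpr hcon)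
  have hab : Crosses S s(a, b) := (hkey _).mpr (crosses_iff.mpr (Or.inl ⟨ha, hb⟩))
  by_cases haS : a ∈ S
  · left
    ext x
    by_cases hxa : x = a
    · subst hxa; simp [haS, ha]
    · have h1 : Crosses S s(a, x) ↔ Crosses Sstar s(a, x) := hkey _
      rw [crosses_iff, crosses_iff] at h1
      by_cases hx : x ∈ S <;> by_cases hx' : x ∈ Sstar <;> simp [hx, hx'] <;> tauto
  · right
    have hbS : b ∈ S := by
      rcases crosses_iff.mp hab with ⟨h1, _⟩ | ⟨h1, _⟩
      · exact absurd h1 haS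
      · exact h1
    ext x
    rw [Finset.mem_compl]
    by_cases hxa : x = a
    · subst hxa; simp [haS, ha]
    · have h1 : Crosses S s(a, x) ↔ Crosses Sstar s(a, x) := hkey _
      rw [crosses_iff, crosses_iff] at h1
      by_cases hx : x ∈ S <;> by_cases hx' : x ∈ Sstar <;> simp [hx, hx'] <;> tauto

end Stmt12
end
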